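/- Let H ∈ ℝ^{n×d}, Σ ∈ ℝ^{n×n} symmetric positive definite, Γ ∈ ℝ^{d×d} symmetric positive semidefinite, K = Γ Hᵀ (H Γ Hᵀ + Σ)⁻¹. Then I + Γ Hᵀ Σ⁻¹ H is invertible and I − K H = (I + Γ Hᵀ Σ⁻¹ H)⁻¹. -/

import Mathlib

open Matrix

theorem stmt13 {n d : ℕ} (H : Matrix (Fin n) (Fin d) ℝ)
    (S : Matrix (Fin n) (Fin n) ℝ) (hS : S.PosDef)
    (Γ : Matrix (Fin d) (Fin d) ℝ) (hΓ : Γ.PosSemidef)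
    (K : Matrix (Fin d) (Fin n) ℝ)
    (hK : K = Γ * Hᵀ * (H * Γ * Hᵀ + S)⁻¹) :
    IsUnit (1 + Γ * Hᵀ * S⁻¹ * H) ∧
    1 - K * H = (1 + Γ * Hᵀ * S⁻¹ * H)⁻¹ := by
  have hA : (H * Γ * Hᵀ + S).PosDef := by
    have hsemi : (H * Γ * Hᵀ).PosSemidef := by
      simpa [Matrix.mul_assoc] using hΓ.mul_mul_conjTranspose_same H
    exact Matrix.PosDef.posSemidef_add hsemi hS
  have hS1 : S⁻¹ * S = 1 := Matrix.nonsing_inv_mul _ hS.det_pos.ne'.isUnit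
  have hA1 : (H * Γ * Hᵀ + S) * (H * Γ * Hᵀ + S)⁻¹ = 1 :=
    Matrix.mul_nonsing_inv _ hA.det_pos.ne'.isUnit
  have key : (1 + Γ * Hᵀ * S⁻¹ * H) * (1 - K * H) = 1 := by
    subst hK
    have e1 : Γ * Hᵀ * S⁻¹ * H =
        Γ * Hᵀ * S⁻¹ * ((H * Γ * Hᵀ + S) * (H * Γ * Hᵀ + S)⁻¹) * H := by
      rw [hA1, Matrix.mul_one]
    have e2 : Γ * Hᵀ * S⁻¹ * ((H * Γ * Hᵀ + S) * (H * Γ * Hᵀ + S)⁻¹) * H =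
        Γ * Hᵀ * S⁻¹ * H * (Γ * Hᵀ * (H * Γ * Hᵀ + S)⁻¹ * H)
        + Γ * Hᵀ * (H * Γ * Hᵀ + S)⁻¹ * H := by
      have h3 : Γ * Hᵀ * S⁻¹ * S = Γ * Hᵀ := by
        rw [Matrix.mul_assoc (Γ * Hᵀ), hS1, Matrix.mul_one]
      rw [← Matrix.mul_assoc (Γ * Hᵀ * S⁻¹), Matrix.mul_add (Γ * Hᵀ * S⁻¹), h3,
        Matrix.add_mul, Matrix.add_mul]
      simp only [Matrix.mul_assoc]
    have e3 : Γ * Hᵀ * S⁻¹ * H =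
        Γ * Hᵀ * S⁻¹ * H * (Γ * Hᵀ * (H * Γ * Hᵀ + S)⁻¹ * H)
        + Γ * Hᵀ * (H * Γ * Hᵀ + S)⁻¹ * H := e1.trans e2
    have expand : (1 + Γ * Hᵀ * S⁻¹ * H) * (1 - Γ * Hᵀ * (H * Γ * Hᵀ + S)⁻¹ * H)
        = 1 + (Γ * Hᵀ * S⁻¹ * H
          - (Γ * Hᵀ * S⁻¹ * H * (Γ * Hᵀ * (H * Γ * Hᵀ + S)⁻¹ * H)
            + Γ * Hᵀ * (H * Γ * Hᵀ + S)⁻¹ * H)) := by noncomm_ring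
    rw [expand, ← e3]
    simp
  refine ⟨(Matrix.isUnit_iff_isUnit_det _).mpr (Matrix.isUnit_det_of_right_inverse key), ?_⟩
  exact (Matrix.inv_eq_right_inv key).symm
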